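/- For the Kneser graph K(2k+2, k) with k ≥ 2, the positive and negative square energies are both equal to (1/2)·C(2k+2, k)·C(k+2, k), where the eigenvalues of K(n,k) are μᵢ = (-1)^i · C(n-k-i, k-i) with multiplicity C(n,i) - C(n,i-1) for 0 ≤ i ≤ k. -/

import Mathlib

open Finset

private def Pq (k i : ℕ) : ℚ := (((k : ℚ) + 2 - i) * ((k : ℚ) + 1 - i) / 2) ^ 2

private def cPq (k i : ℕ) : ℚ :=
  Pq k i * (((2 * k + 2).choose i : ℚ) - if i = 0 then 0 else ((2 * k + 2).choose (i - 1) : ℚ))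

private def gq (k j : ℕ) : ℚ :=
  (-1 : ℚ) ^ j * ((((k : ℚ) + 1 - j) ^ 2 * (((k : ℚ) + 1 - j) ^ 2 + 1)) / 2) *
    ((2 * k + 2).choose j : ℚ)

private lemma ch2 (m : ℕ) : (((m + 2).choose 2 : ℕ) : ℚ) = ((m : ℚ) + 2) * ((m : ℚ) + 1) / 2 := by
  induction m with
  | zero => norm_num
  | succ m ih =>
    rw [show m + 1 + 2 = (m + 2) + 1 by omega, Nat.choose_succ_succ' (m + 2) 1,
      Nat.choose_one_right]
    push_cast
    push_cast at ih
    rw [ih]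
    ring

private lemma chooseQ (k i : ℕ) (h : i ≤ k) :
    (((k + 2 - i).choose (k - i) : ℕ) : ℚ) = ((k : ℚ) + 2 - i) * ((k : ℚ) + 1 - i) / 2 := by
  have h1 : k + 2 - i = (k - i) + 2 := by omega
  have h2 : ((k - i) + 2).choose (k - i) = ((k - i) + 2).choose 2 := by
    rw [← Nat.choose_symm (show 2 ≤ (k - i) + 2 by omega), show (k - i) + 2 - 2 = k - i by omega]
  rw [h1, h2, ch2 (k - i)]
  have h3 : ((k - i : ℕ) : ℚ) = (k : ℚ) - i := by
    rw [Nat.cast_sub h]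
  rw [h3]
  ring

private lemma diffstep (f : ℕ → ℚ) (n : ℕ) :
    ∑ j ∈ range (n + 2), (-1 : ℚ) ^ j * f j * ((n + 1).choose j : ℚ)
      = -∑ j ∈ range (n + 1), (-1 : ℚ) ^ j * (f (j + 1) - f j) * (n.choose j : ℚ) := by
  have h0 : ∑ j ∈ range (n + 2), (-1 : ℚ) ^ j * f j * ((n + 1).choose j : ℚ)
      = (∑ j ∈ range (n + 1), (-1 : ℚ) ^ (j + 1) * f (j + 1) * ((n + 1).choose (j + 1) : ℚ))
        + f 0 := by
    rw [Finset.sum_range_succ']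
    simp
  have h1 : ∑ j ∈ range (n + 1), (-1 : ℚ) ^ (j + 1) * f (j + 1) * ((n + 1).choose (j + 1) : ℚ)
      = ∑ j ∈ range (n + 1), (-((-1 : ℚ) ^ j * f (j + 1) * (n.choose j : ℚ))
          + (-1 : ℚ) ^ (j + 1) * f (j + 1) * (n.choose (j + 1) : ℚ)) := by
    refine Finset.sum_congr rfl fun j hj => ?_
    rw [Nat.choose_succ_succ' n j]
    push_cast
    ring
  have h3 : ∑ j ∈ range (n + 2), (-1 : ℚ) ^ j * f j * (n.choose j : ℚ)
      = (∑ j ∈ range (n + 1), (-1 : ℚ) ^ (j + 1) * f (j + 1) * (n.choose (j + 1) : ℚ)) + f 0 := by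
    rw [Finset.sum_range_succ']
    simp
  have h4 : ∑ j ∈ range (n + 2), (-1 : ℚ) ^ j * f j * (n.choose j : ℚ)
      = ∑ j ∈ range (n + 1), (-1 : ℚ) ^ j * f j * (n.choose j : ℚ) := by
    rw [Finset.sum_range_succ, Nat.choose_succ_self]
    simp
  have h2 : ∑ j ∈ range (n + 1), (-1 : ℚ) ^ (j + 1) * f (j + 1) * (n.choose (j + 1) : ℚ)
      = (∑ j ∈ range (n + 1), (-1 : ℚ) ^ j * f j * (n.choose j : ℚ)) - f 0 := by
    rw [← h4, h3]; ring
  have h5 : (∑ j ∈ range (n + 1), -((-1 : ℚ) ^ j * f (j + 1) * (n.choose j : ℚ)))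
        + ∑ j ∈ range (n + 1), (-1 : ℚ) ^ j * f j * (n.choose j : ℚ)
      = ∑ j ∈ range (n + 1), -((-1 : ℚ) ^ j * (f (j + 1) - f j) * (n.choose j : ℚ)) := by
    rw [← Finset.sum_add_distrib]
    exact Finset.sum_congr rfl fun j _ => by ring
  rw [h0, h1, Finset.sum_add_distrib, h2, ← Finset.sum_neg_distrib]
  rw [← h5]
  ring

private lemma altzero (K : ℕ) :
    ∑ j ∈ range (2 * K + 7), (-1 : ℚ) ^ j *
        ((((K : ℚ) + 3 - j) ^ 2 * (((K : ℚ) + 3 - j) ^ 2 + 1)) / 2) *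
        ((2 * K + 6).choose j : ℚ) = 0 := by
  rw [show 2 * K + 7 = (2 * K + 5) + 2 by omega, show 2 * K + 6 = (2 * K + 5) + 1 by omega]
  rw [diffstep]
  rw [show 2 * K + 5 + 1 = (2 * K + 4) + 2 by omega, show 2 * K + 5 = (2 * K + 4) + 1 by omega]
  rw [diffstep]
  rw [show 2 * K + 4 + 1 = (2 * K + 3) + 2 by omega, show 2 * K + 4 = (2 * K + 3) + 1 by omega]
  rw [diffstep]
  rw [show 2 * K + 3 + 1 = (2 * K + 2) + 2 by omega, show 2 * K + 3 = (2 * K + 2) + 1 by omega]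
  rw [diffstep]
  rw [show 2 * K + 2 + 1 = (2 * K + 1) + 2 by omega, show 2 * K + 2 = (2 * K + 1) + 1 by omega]
  rw [diffstep]
  simp only [neg_neg, neg_eq_zero]
  refine Finset.sum_eq_zero fun j hj => ?_
  have h : ∀ a b c : ℚ, b = 0 → a * b * c = 0 := by intros a b c hb; rw [hb]; ring
  apply h
  push_cast
  ring

set_option maxHeartbeats 1000000 in
private lemma halfalt (k : ℕ) (hk : 2 ≤ k) :
    ∑ j ∈ range (k + 1), gq k j = 0 := by
  have htot : ∑ j ∈ range (2 * k + 3), gq k j = 0 := by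
    obtain ⟨K, rfl⟩ : ∃ K, k = K + 2 := ⟨k - 2, by omega⟩
    calc ∑ j ∈ range (2 * (K + 2) + 3), gq (K + 2) j
        = ∑ j ∈ range (2 * K + 7), (-1 : ℚ) ^ j *
            ((((K : ℚ) + 3 - j) ^ 2 * (((K : ℚ) + 3 - j) ^ 2 + 1)) / 2) *
            ((2 * K + 6).choose j : ℚ) := by
          rw [show 2 * (K + 2) + 3 = 2 * K + 7 by omega]
          refine Finset.sum_congr rfl fun j _ => ?_
          simp only [gq]
          rw [show 2 * (K + 2) + 2 = 2 * K + 6 by omega]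
          push_cast
          ring
      _ = 0 := altzero K
  have h1 : ∑ j ∈ range (2 * k + 3), gq k j
      = (∑ j ∈ Ico 0 (k + 1), gq k j) + ∑ j ∈ Ico (k + 1) (2 * k + 3), gq k j := by
    rw [Finset.range_eq_Ico]
    exact (Finset.sum_Ico_consecutive (gq k) (by omega) (by omega)).symm
  have h2 : ∑ j ∈ Ico 0 (k + 1), gq k j = ∑ j ∈ range (k + 1), gq k j := by
    rw [Finset.range_eq_Ico]
  have hmid : gq k (k + 1) = 0 := by
    simp only [gq]
    have h0 : ((k : ℚ) + 1 - ((k + 1 : ℕ) : ℚ)) = 0 := by push_cast; ring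
    rw [h0]
    norm_num
  have h3 : ∑ j ∈ Ico (k + 1) (2 * k + 3), gq k j
      = ∑ j ∈ Ico (k + 2) (2 * k + 3), gq k j := by
    rw [Finset.sum_eq_sum_Ico_succ_bot (by omega : k + 1 < 2 * k + 3) (gq k), hmid, zero_add]
  have h4 : ∑ j ∈ Ico (k + 2) (2 * k + 3), gq k j
      = ∑ i ∈ range (k + 1), gq k (k + 2 + i) := by
    rw [Finset.sum_Ico_eq_sum_range, show 2 * k + 3 - (k + 2) = k + 1 by omega]
  have hre := Finset.sum_range_reflect (fun i => gq k (k + 2 + i)) (k + 1)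
  simp only [Nat.add_sub_cancel] at hre
  have h5 : ∑ j ∈ range (k + 1), gq k (k + 2 + (k - j))
      = ∑ j ∈ range (k + 1), gq k j := by
    refine Finset.sum_congr rfl fun i hi => ?_
    have hik : i ≤ k := Nat.lt_succ_iff.mp (Finset.mem_range.mp hi)
    rw [show k + 2 + (k - i) = 2 * k + 2 - i by omega]
    have hc : ((2 * k + 2).choose (2 * k + 2 - i) : ℚ) = ((2 * k + 2).choose i : ℚ) := by
      rw [Nat.choose_symm (by omega)]
    have hp : (-1 : ℚ) ^ (2 * k + 2 - i) = (-1 : ℚ) ^ i := by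
      rw [show 2 * k + 2 - i = i + 2 * (k + 1 - i) by omega, pow_add, pow_mul]
      norm_num
    have hx : (((2 * k + 2 - i : ℕ)) : ℚ) = 2 * (k : ℚ) + 2 - i := by
      rw [Nat.cast_sub (by omega)]
      push_cast
      ring
    simp only [gq]
    rw [hc, hp, hx]
    ring
  rw [h1, h2, h3, h4, ← hre, h5] at htot
  linarith

private lemma glem (k : ℕ) : ∀ m, m ≤ 2 * k →
    ∑ j ∈ range (m + 1), ((k : ℚ) + 1 - j) ^ 3 * ((2 * k + 2).choose j : ℚ)
      = ((k : ℚ) + 1) * ((m : ℚ) ^ 2 - (2 * (k : ℚ) + 1) * m + ((k : ℚ) + 1) ^ 2)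
          * ((2 * k + 1).choose m : ℚ) := by
  intro m
  induction m with
  | zero => intro _; simp; ring
  | succ m ih =>
    intro hm
    have hm' : m ≤ 2 * k := by omega
    rw [Finset.sum_range_succ, ih hm']
    have hAB : ((2 * k + 1).choose (m + 1) : ℚ) * ((m : ℚ) + 1)
        = ((2 * k + 1).choose m : ℚ) * (2 * (k : ℚ) + 1 - m) := by
      have h := Nat.choose_succ_right_eq (2 * k + 1) m
      have hx : (((2 * k + 1 - m : ℕ)) : ℚ) = 2 * (k : ℚ) + 1 - m := by
        rw [Nat.cast_sub (by omega)]; push_cast; ring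
      have hq := congrArg (fun t : ℕ => (t : ℚ)) h
      push_cast at hq
      rw [← hx]
      push_cast
      linarith [hq]
    have hP : (((2 * k + 2).choose (m + 1) : ℕ) : ℚ)
        = ((2 * k + 1).choose m : ℚ) + ((2 * k + 1).choose (m + 1) : ℚ) := by
      have hpp : (2 * k + 2).choose (m + 1)
          = (2 * k + 1).choose m + (2 * k + 1).choose (m + 1) := by
        rw [show 2 * k + 2 = (2 * k + 1) + 1 by omega]
        exact Nat.choose_succ_succ' (2 * k + 1) m
      exact_mod_cast congrArg (fun t : ℕ => (t : ℚ)) hpp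
    rw [hP]
    have hne : ((m : ℚ) + 1) ≠ 0 := by positivity
    apply mul_left_cancel₀ hne
    push_cast
    linear_combination (((k : ℚ) - m) ^ 3 - ((k : ℚ) + 1) *
      (((m : ℚ) + 1) ^ 2 - (2 * (k : ℚ) + 1) * ((m : ℚ) + 1) + ((k : ℚ) + 1) ^ 2)) * hAB

set_option maxHeartbeats 1000000 in
theorem stmt19 (k : ℕ) (hk : 2 ≤ k) :
    (∑ i ∈ (Finset.range (k + 1)).filter (fun i => Even i),
        ((k + 2 - i).choose (k - i) : ℚ) ^ 2 *
          (((2 * k + 2).choose i : ℚ) -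
            if i = 0 then 0 else ((2 * k + 2).choose (i - 1) : ℚ))) =
      (1 / 2) * ((2 * k + 2).choose k : ℚ) * ((k + 2).choose k : ℚ) ∧
    (∑ i ∈ (Finset.range (k + 1)).filter (fun i => ¬ Even i),
        ((k + 2 - i).choose (k - i) : ℚ) ^ 2 *
          (((2 * k + 2).choose i : ℚ) -
            if i = 0 then 0 else ((2 * k + 2).choose (i - 1) : ℚ))) =
      (1 / 2) * ((2 * k + 2).choose k : ℚ) * ((k + 2).choose k : ℚ) := by
  have hbody : ∀ i ∈ range (k + 1),
      ((k + 2 - i).choose (k - i) : ℚ) ^ 2 *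
        (((2 * k + 2).choose i : ℚ) -
          if i = 0 then 0 else ((2 * k + 2).choose (i - 1) : ℚ)) = cPq k i := by
    intro i hi
    have hik : i ≤ k := Nat.lt_succ_iff.mp (Finset.mem_range.mp hi)
    simp only [cPq, Pq]
    rw [chooseQ k i hik]
  have hE : (∑ i ∈ (Finset.range (k + 1)).filter (fun i => Even i),
        ((k + 2 - i).choose (k - i) : ℚ) ^ 2 *
          (((2 * k + 2).choose i : ℚ) -
            if i = 0 then 0 else ((2 * k + 2).choose (i - 1) : ℚ)))
      = ∑ i ∈ (Finset.range (k + 1)).filter (fun i => Even i), cPq k i :=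
    Finset.sum_congr rfl fun i hi => hbody i (Finset.mem_of_mem_filter i hi)
  have hO : (∑ i ∈ (Finset.range (k + 1)).filter (fun i => ¬ Even i),
        ((k + 2 - i).choose (k - i) : ℚ) ^ 2 *
          (((2 * k + 2).choose i : ℚ) -
            if i = 0 then 0 else ((2 * k + 2).choose (i - 1) : ℚ)))
      = ∑ i ∈ (Finset.range (k + 1)).filter (fun i => ¬ Even i), cPq k i :=
    Finset.sum_congr rfl fun i hi => hbody i (Finset.mem_of_mem_filter i hi)
  have hEO : (∑ i ∈ (Finset.range (k + 1)).filter (fun i => Even i), cPq k i)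
      + (∑ i ∈ (Finset.range (k + 1)).filter (fun i => ¬ Even i), cPq k i)
      = ∑ i ∈ range (k + 1), cPq k i :=
    Finset.sum_filter_add_sum_filter_not (range (k + 1)) (fun i => Even i) (cPq k)
  have hDiffE : ∑ i ∈ (Finset.range (k + 1)).filter (fun i => Even i),
      (-1 : ℚ) ^ i * cPq k i
      = ∑ i ∈ (Finset.range (k + 1)).filter (fun i => Even i), cPq k i := by
    refine Finset.sum_congr rfl fun i hi => ?_
    rw [Even.neg_one_pow (Finset.mem_filter.mp hi).2, one_mul]
  have hDiffO : ∑ i ∈ (Finset.range (k + 1)).filter (fun i => ¬ Even i),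
      (-1 : ℚ) ^ i * cPq k i
      = -∑ i ∈ (Finset.range (k + 1)).filter (fun i => ¬ Even i), cPq k i := by
    rw [← Finset.sum_neg_distrib]
    refine Finset.sum_congr rfl fun i hi => ?_
    rw [Odd.neg_one_pow (Nat.not_even_iff_odd.mp (Finset.mem_filter.mp hi).2)]
    ring
  have hDiff : (∑ i ∈ (Finset.range (k + 1)).filter (fun i => Even i), cPq k i)
      - (∑ i ∈ (Finset.range (k + 1)).filter (fun i => ¬ Even i), cPq k i)
      = ∑ i ∈ range (k + 1), (-1 : ℚ) ^ i * cPq k i := by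
    rw [← Finset.sum_filter_add_sum_filter_not (range (k + 1)) (fun i => Even i)
      (fun i => (-1 : ℚ) ^ i * cPq k i), hDiffE, hDiffO]
    ring
  have hcm : ∀ m : ℕ, cPq k (m + 1) = Pq k (m + 1) * (((2 * k + 2).choose (m + 1) : ℚ)
      - ((2 * k + 2).choose m : ℚ)) := by
    intro m
    simp only [cPq, Nat.succ_ne_zero, if_false, Nat.add_sub_cancel]
  have hsumc : ∀ m : ℕ, ∑ i ∈ range (m + 1), cPq k i
      = Pq k m * ((2 * k + 2).choose m : ℚ)
        + ∑ j ∈ range m, ((k : ℚ) + 1 - j) ^ 3 * ((2 * k + 2).choose j : ℚ) := by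
    intro m
    induction m with
    | zero => simp [cPq]
    | succ m ih =>
      rw [Finset.sum_range_succ, ih, Finset.sum_range_succ, hcm m]
      have hkey : Pq k m - Pq k (m + 1) = ((k : ℚ) + 1 - m) ^ 3 := by
        simp only [Pq]; push_cast; ring
      linear_combination (((2 * k + 2).choose m : ℕ) : ℚ) * hkey
  have hsumalt : ∀ m : ℕ, ∑ i ∈ range (m + 1), (-1 : ℚ) ^ i * cPq k i
      = (-1 : ℚ) ^ m * Pq k m * ((2 * k + 2).choose m : ℚ)
        + ∑ j ∈ range m, gq k j := by
    intro m
    induction m with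
    | zero => simp [cPq]
    | succ m ih =>
      rw [Finset.sum_range_succ, ih, Finset.sum_range_succ, hcm m]
      have hkey : (((k : ℚ) + 1 - m) ^ 2 * (((k : ℚ) + 1 - m) ^ 2 + 1)) / 2
          = Pq k m + Pq k (m + 1) := by
        simp only [Pq]; push_cast; ring
      simp only [gq]
      linear_combination (-((-1 : ℚ)) ^ m) * (((2 * k + 2).choose m : ℕ) : ℚ) * hkey
  have hPk : Pq k k = 1 := by
    simp only [Pq]
    have : ((k : ℚ) + 2 - k) * ((k : ℚ) + 1 - k) / 2 = 1 := by ring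
    rw [this]
    norm_num
  have hT : ∑ i ∈ range (k + 1), cPq k i
      = ((k : ℚ) + 1) ^ 2 * ((2 * k + 1).choose k : ℚ) := by
    rw [hsumc k]
    have hg := glem k k (by omega)
    have hlast : ∑ j ∈ range k, ((k : ℚ) + 1 - j) ^ 3 * ((2 * k + 2).choose j : ℚ)
        = (∑ j ∈ range (k + 1), ((k : ℚ) + 1 - j) ^ 3 * ((2 * k + 2).choose j : ℚ))
          - ((k : ℚ) + 1 - k) ^ 3 * ((2 * k + 2).choose k : ℚ) := by
      rw [Finset.sum_range_succ]; ring
    rw [hPk, hlast, hg]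
    have h1 : ((k : ℚ) + 1 - k) = 1 := by ring
    rw [h1]
    ring_nf
  have hA : ∑ i ∈ range (k + 1), (-1 : ℚ) ^ i * cPq k i = 0 := by
    rw [hsumalt k]
    have hh := halfalt k hk
    have hlast : ∑ j ∈ range k, gq k j
        = (∑ j ∈ range (k + 1), gq k j) - gq k k := by
      rw [Finset.sum_range_succ]; ring
    have hgk : gq k k = (-1 : ℚ) ^ k * ((2 * k + 2).choose k : ℚ) := by
      simp only [gq]
      have h1 : ((k : ℚ) + 1 - k) = 1 := by ring
      rw [h1]
      ring
    rw [hlast, hh, hgk, hPk]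
    ring
  have hfin : ((k : ℚ) + 1) ^ 2 * ((2 * k + 1).choose k : ℚ)
      = ((2 * k + 2).choose k : ℚ) * ((k + 2).choose k : ℚ) := by
    have hck : ((k + 2).choose k : ℚ) = ((k : ℚ) + 2) * ((k : ℚ) + 1) / 2 := by
      have h2 : (k + 2).choose k = (k + 2).choose 2 := by
        rw [← Nat.choose_symm (show k ≤ k + 2 by omega), show k + 2 - k = 2 by omega]
      rw [h2, ch2 k]
    have f1 : (2 * (k : ℚ) + 2) * ((2 * k + 1).choose k : ℚ)
        = ((k : ℚ) + 1) * ((2 * k + 2).choose (k + 1) : ℚ) := by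
      have h' : (2 * k + 2) * (2 * k + 1).choose k = (2 * k + 2).choose (k + 1) * (k + 1) := by
        rw [show 2 * k + 2 = Nat.succ (2 * k + 1) by omega]
        exact Nat.add_one_mul_choose_eq (2 * k + 1) k
      have hq := congrArg (fun t : ℕ => (t : ℚ)) h'
      push_cast at hq
      linarith
    have f2 : ((2 * k + 2).choose (k + 1) : ℚ) * ((k : ℚ) + 1)
        = ((2 * k + 2).choose k : ℚ) * ((k : ℚ) + 2) := by
      have h := Nat.choose_succ_right_eq (2 * k + 2) k
      rw [show 2 * k + 2 - k = k + 2 by omega] at h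
      have hq := congrArg (fun t : ℕ => (t : ℚ)) h
      push_cast at hq
      linarith
    rw [hck]
    linear_combination (((k : ℚ) + 1) / 2) * f1 + (((k : ℚ) + 1) / 2) * f2
  rw [hE, hO]
  constructor <;> linarith [hEO, hDiff, hT, hA, hfin]
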